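/- arXiv:1902.07136 — 6 statements merged into one kernel-verified Lean document; each statement's English description precedes it below -/
import Mathlib

section
/- The set of prime numbers p such that the polynomial x² − x − 1 has no root in the field ℤ/pℤ is infinite. Consequently, there are infinitely many finite fields containing no root of x² − x − 1. -/
/-- The set of primes `p` such that `x² − x − 1` has no root in `ℤ/pℤ` is infinite;
consequently, there are infinitely many finite (prime) fields containing no root of
`x² − x − 1`. -/
theorem stmt_0 :
    {p : ℕ | p.Prime ∧ ¬∃ z : ZMod p, z ^ 2 = z + 1}.Infinite := by
  refine (Nat.infinite_setOfPred_prime_and_eq_mod (q := 5) (a := 2) (by decide)).mono ?_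
  rintro p ⟨hp, hmod⟩
  refine ⟨hp, ?_⟩
  rintro ⟨z, hz⟩
  rcases eq_or_ne p 2 with rfl | hp2
  · revert hz; revert z; decide
  · haveI := Fact.mk hp
    haveI : Fact (Nat.Prime 5) := ⟨by norm_num⟩
    have h5 : ¬ IsSquare ((5 : ℕ) : ZMod p) := by
      rw [← ZMod.exists_sq_eq_prime_iff_of_mod_four_eq_one (p := 5) (q := p) (by norm_num) hp2,
        hmod]
      decide +revert
    apply h5
    refine ⟨2 * z - 1, ?_⟩
    push_cast
    linear_combination (-4 : ZMod p) * hz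
end

section
/- Let F be a field. There exists an element x ∈ F such that x, x + 1, x − 1, x + 2, and 2x + 1 are all nonzero if and only if F is infinite, or F has exactly 4 elements, or F has at least 7 elements. (Equivalently, F is not isomorphic to GF(2), GF(3), or GF(5).) -/
/-- A field `F` admits an element `x` with `x`, `x+1`, `x−1`, `x+2`, `2x+1` all nonzero
iff `F` is infinite, has exactly 4 elements, or has at least 7 elements. -/
theorem stmt_2 (F : Type*) [Field F] :
    (∃ x : F, x ≠ 0 ∧ x + 1 ≠ 0 ∧ x - 1 ≠ 0 ∧ x + 2 ≠ 0 ∧ 2 * x + 1 ≠ 0) ↔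
      (Infinite F ∨ Nat.card F = 4 ∨ 7 ≤ Nat.card F) := by
  constructor
  · rintro ⟨x, h0, h1, h2, h3, h4⟩
    rcases finite_or_infinite F with hF | hF
    · right
      haveI := Fintype.ofFinite F
      rw [Nat.card_eq_fintype_card]
      by_contra hcon
      push_neg at hcon
      obtain ⟨hne4, hlt7⟩ := hcon
      have hq2 : 1 < Fintype.card F := Fintype.one_lt_card
      obtain ⟨p, hp⟩ := CharP.exists F
      haveI := hp
      have hpp : p.Prime := CharP.char_is_prime F p
      obtain ⟨n, -, hcard⟩ := FiniteField.card F p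
      have hn0 : 0 < (n : ℕ) := n.pos
      have hpow := FiniteField.pow_card x
      interval_cases hq : Fintype.card F
      · -- card 2 : x^2 = x
        have hz : x * (x - 1) = 0 := by linear_combination hpow
        rcases mul_eq_zero.mp hz with h | h
        · exact h0 h
        · exact h2 h
      · -- card 3
        have hz : x * ((x - 1) * (x + 1)) = 0 := by linear_combination hpow
        rcases mul_eq_zero.mp hz with h | h
        · exact h0 h
        · rcases mul_eq_zero.mp h with h | h
          · exact h2 h
          · exact h1 h
      · -- card 4: contradiction with hne4
        omega
      · -- card 5
        have hp5 : p = 5 := by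
          have hd : p ∣ 5 := by rw [hcard]; exact dvd_pow_self p hn0.ne'
          exact (Nat.prime_dvd_prime_iff_eq hpp (by norm_num)).mp hd
        subst hp5
        have h50 : ((5 : ℕ) : F) = 0 := CharP.cast_eq_zero F 5
        push_cast at h50
        have hz : x * ((x - 1) * ((x + 1) * (x * x + 1))) = 0 := by
          linear_combination hpow
        have hsq : x * x + 1 = 0 := by
          rcases mul_eq_zero.mp hz with h | h
          · exact absurd h h0
          rcases mul_eq_zero.mp h with h | h
          · exact absurd h h2
          rcases mul_eq_zero.mp h with h | h
          · exact absurd h h1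
          · exact h
        have hz2 : (x - 2) * (x + 2) = 0 := by linear_combination hsq - h50
        rcases mul_eq_zero.mp hz2 with h | h
        · exact h4 (by linear_combination 2 * h + h50)
        · exact h3 h
      · -- card 6 : impossible
        have hd : p ∣ 6 := by rw [hcard]; exact dvd_pow_self p hn0.ne'
        have hple : p ≤ 6 := Nat.le_of_dvd (by norm_num) hd
        have hp2 : 2 ≤ p := hpp.two_le
        have hnlt : (n : ℕ) < 6 := by
          calc (n : ℕ) < p ^ (n : ℕ) := Nat.lt_pow_self hpp.one_lt
            _ = 6 := hcard.symm
        set m := (n : ℕ) with hm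
        clear_value m
        clear hm
        interval_cases p
        · interval_cases m <;> norm_num at hcard
        · interval_cases m <;> norm_num at hcard
        · exact absurd hpp (by norm_num)
        · norm_num at hd
        · exact absurd hpp (by norm_num)
    · exact Or.inl hF
  · intro hF
    classical
    set s : Finset F := {0, 1, -1, -2, -2⁻¹} with hs
    have key : ∀ x : F, x ∉ s →
        (x ≠ 0 ∧ x + 1 ≠ 0 ∧ x - 1 ≠ 0 ∧ x + 2 ≠ 0 ∧ 2 * x + 1 ≠ 0) := by
      intro x hx
      simp only [hs, Finset.mem_insert, Finset.mem_singleton, not_or] at hx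
      obtain ⟨e0, e1, e2, e3, e4⟩ := hx
      refine ⟨e0, ?_, ?_, ?_, ?_⟩
      · intro h; exact e2 (by linear_combination h)
      · intro h; exact e1 (by linear_combination h)
      · intro h; exact e3 (by linear_combination h)
      · intro h
        by_cases h2 : (2 : F) = 0
        · rw [h2] at h; simp at h
        · refine e4 ?_
          field_simp
          linear_combination h
    rcases hF with hF | h4 | h7
    · obtain ⟨x, hx⟩ := Infinite.exists_notMem_finset s
      exact ⟨x, key x hx⟩
    · -- card 4 : characteristic 2
      have hfin : Finite F := Nat.finite_of_card_ne_zero (by omega)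
      haveI := Fintype.ofFinite F
      rw [Nat.card_eq_fintype_card] at h4
      obtain ⟨p, hp⟩ := CharP.exists F
      haveI := hp
      have hpp : p.Prime := CharP.char_is_prime F p
      obtain ⟨n, -, hcard⟩ := FiniteField.card F p
      have hn0 : 0 < (n : ℕ) := n.pos
      have hp2 : p = 2 := by
        have hd : p ∣ 4 := by rw [← h4, hcard]; exact dvd_pow_self p hn0.ne'
        have : p ≤ 4 := Nat.le_of_dvd (by norm_num) hd
        have h2 := hpp.two_le
        interval_cases p
        · rfl
        · norm_num at hd
        · exact absurd hpp (by norm_num)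
      subst hp2
      have h20 : ((2 : ℕ) : F) = 0 := CharP.cast_eq_zero F 2
      push_cast at h20
      have hneg : (-1 : F) = 1 := by linear_combination -h20
      have h2inv : (2 : F)⁻¹ = 0 := by rw [h20, inv_zero]
      have hsub : s ⊆ ({0, 1} : Finset F) := by
        intro y hy
        simp only [hs, Finset.mem_insert, Finset.mem_singleton] at hy ⊢
        rcases hy with h | h | h | h | h
        · left; exact h
        · right; exact h
        · right; rw [h, hneg]
        · left; rw [h, h20, neg_zero]
        · left; rw [h, h2inv, neg_zero]
      have hlt : s.card < Fintype.card F := by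
        have := Finset.card_le_card hsub
        have h01 : ({0, 1} : Finset F).card ≤ 2 :=
          (Finset.card_insert_le _ _).trans (by simp)
        omega
      have : (sᶜ).Nonempty := Finset.card_pos.mp (by rw [Finset.card_compl]; omega)
      obtain ⟨x, hx⟩ := this
      exact ⟨x, key x (Finset.mem_compl.mp hx)⟩
    · have hfin : Finite F := Nat.finite_of_card_ne_zero (by omega)
      haveI := Fintype.ofFinite F
      rw [Nat.card_eq_fintype_card] at h7
      have hs5 : s.card ≤ 5 := by
        have hA := Finset.card_insert_le (0 : F) ({1, -1, -2, -2⁻¹} : Finset F)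
        have hB := Finset.card_insert_le (1 : F) ({-1, -2, -2⁻¹} : Finset F)
        have hC := Finset.card_insert_le (-1 : F) ({-2, -2⁻¹} : Finset F)
        have hD := Finset.card_insert_le (-2 : F) ({-2⁻¹} : Finset F)
        simp only [Finset.card_singleton] at hD
        simp only [hs]
        omega
      have : (sᶜ).Nonempty := Finset.card_pos.mp (by rw [Finset.card_compl]; omega)
      obtain ⟨x, hx⟩ := this
      exact ⟨x, key x (Finset.mem_compl.mp hx)⟩
end

section
/- Let F be a field. There exist elements x₁, x₂ ∈ F such that x₁, x₂, x₁ − 1, x₂ − 1, x₁ − x₂, x₁x₂ − x₁ + 1, and x₁x₂ − x₂ + 1 are all nonzero if and only if F is infinite, or F has exactly 4 elements, or F has at least 7 elements. (Equivalently, F is not isomorphic to GF(2), GF(3), or GF(5).) -/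
/-- In an infinite field, or a field with more than `s.card` elements, there is an
element outside `s`. -/
lemma stmt_3_exists_notMem (F : Type*) [Field F] (s : Finset F)
    (h : Infinite F ∨ s.card < Nat.card F) : ∃ x, x ∉ s := by
  classical
  rcases h with h | h
  · exact Infinite.exists_notMem_finset s
  · have hfin : Finite F := Nat.finite_of_card_ne_zero (by omega)
    haveI : Fintype F := Fintype.ofFinite F
    rw [Nat.card_eq_fintype_card] at h
    have hpos : 0 < sᶜ.card := by
      rw [Finset.card_compl]; omega
    obtain ⟨x, hx⟩ := Finset.card_pos.mp hpos
    exact ⟨x, Finset.mem_compl.mp hx⟩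

/-- In characteristic 2, `x₁ = a`, `x₂ = a + 1` works for any `a ∉ {0, 1}`. -/
lemma stmt_3_char_two (F : Type*) [Field F] (h2 : (1 : F) + 1 = 0) (a : F)
    (h0 : a ≠ 0) (h1 : a ≠ 1) :
    ∃ x₁ x₂ : F, x₁ ≠ 0 ∧ x₂ ≠ 0 ∧ x₁ - 1 ≠ 0 ∧ x₂ - 1 ≠ 0 ∧ x₁ - x₂ ≠ 0 ∧
      x₁ * x₂ - x₁ + 1 ≠ 0 ∧ x₁ * x₂ - x₂ + 1 ≠ 0 := by
  refine ⟨a, a + 1, h0, ?_, sub_ne_zero.mpr h1, ?_, ?_, ?_, ?_⟩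
  · intro h
    exact h1 (by linear_combination h - h2)
  · intro h
    exact h0 (by linear_combination h)
  · intro h
    exact one_ne_zero (α := F) (by linear_combination -h)
  · intro h
    have : (a + 1) * (a + 1) = 0 := by linear_combination h + a * h2
    exact h1 (by linear_combination (mul_self_eq_zero.mp this) - h2)
  · intro h
    have : a * a = 0 := by linear_combination h
    exact h0 (mul_self_eq_zero.mp this)

lemma stmt_3_zmod5 : ∀ y₁ y₂ : ZMod 5, ¬(y₁ ≠ 0 ∧ y₂ ≠ 0 ∧ y₁ - 1 ≠ 0 ∧ y₂ - 1 ≠ 0 ∧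
    y₁ - y₂ ≠ 0 ∧ y₁ * y₂ - y₁ + 1 ≠ 0 ∧ y₁ * y₂ - y₂ + 1 ≠ 0) := by decide

/-- A field `F` admits elements `x₁, x₂` with `x₁`, `x₂`, `x₁−1`, `x₂−1`, `x₁−x₂`,
`x₁x₂−x₁+1`, `x₁x₂−x₂+1` all nonzero iff `F` is infinite, has exactly 4 elements, or has
at least 7 elements. -/
theorem stmt_3 (F : Type*) [Field F] :
    (∃ x₁ x₂ : F, x₁ ≠ 0 ∧ x₂ ≠ 0 ∧ x₁ - 1 ≠ 0 ∧ x₂ - 1 ≠ 0 ∧ x₁ - x₂ ≠ 0 ∧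
      x₁ * x₂ - x₁ + 1 ≠ 0 ∧ x₁ * x₂ - x₂ + 1 ≠ 0) ↔
      (Infinite F ∨ Nat.card F = 4 ∨ 7 ≤ Nat.card F) := by
  classical
  constructor
  · rintro ⟨x₁, x₂, h1, h2, h3, h4, h5, h6, h7⟩
    by_contra hcon
    push_neg at hcon
    obtain ⟨hinf, hn4, hlt7⟩ := hcon
    have hfin : Finite F := hinf
    haveI : Fintype F := Fintype.ofFinite F
    have hn1 : x₁ ≠ 1 := sub_ne_zero.mp h3
    have hn2 : x₂ ≠ 1 := sub_ne_zero.mp h4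
    have hn12 : x₁ ≠ x₂ := sub_ne_zero.mp h5
    -- `{0, 1, x₁, x₂}` has 4 elements, so `4 ≤ Nat.card F`
    have hcard4 : 4 ≤ Nat.card F := by
      have hle := Finset.card_le_univ ({0, 1, x₁, x₂} : Finset F)
      have hc : ({0, 1, x₁, x₂} : Finset F).card = 4 := by
        rw [Finset.card_insert_of_notMem (by simp [h1.symm, h2.symm]),
          Finset.card_insert_of_notMem (by simp [hn1.symm, hn2.symm]),
          Finset.card_insert_of_notMem (by simp [hn12]), Finset.card_singleton]
      rw [hc, ← Nat.card_eq_fintype_card] at hle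
      exact hle
    -- the cardinality is a prime power
    obtain ⟨n, hp, hcard⟩ := FiniteField.card F (ringChar F)
    rw [← Nat.card_eq_fintype_card] at hcard
    -- so `Nat.card F ≠ 6`, hence `Nat.card F = 5`
    have h5card : Nat.card F = 5 := by
      rcases (by omega : Nat.card F = 5 ∨ Nat.card F = 6) with h | h
      · exact h
      · exfalso
        rw [h] at hcard
        have hd2 : (2 : ℕ) ∣ ringChar F :=
          Nat.Prime.dvd_of_dvd_pow Nat.prime_two (by rw [← hcard]; norm_num)
        have hd3 : (3 : ℕ) ∣ ringChar F :=
          Nat.Prime.dvd_of_dvd_pow Nat.prime_three (by rw [← hcard]; norm_num)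
        rcases (hp.eq_one_or_self_of_dvd 2 hd2) with h' | h'
        · omega
        rcases (hp.eq_one_or_self_of_dvd 3 hd3) with h'' | h''
        · omega
        omega
    -- char is 5
    rw [h5card] at hcard
    have hchar : ringChar F = 5 := by
      have hd5 : (5 : ℕ) ∣ ringChar F :=
        Nat.Prime.dvd_of_dvd_pow (by norm_num) (by rw [← hcard])
      rcases (hp.eq_one_or_self_of_dvd 5 hd5) with h' | h'
      · omega
      · omega
    haveI : CharP F 5 := hchar ▸ ringChar.charP F
    haveI : Fact (Nat.Prime 5) := ⟨by norm_num⟩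
    -- transfer to `ZMod 5` and decide
    set f := ZMod.castHom (dvd_refl 5) F with hf
    have hinjf : Function.Injective f := f.injective
    have hbij : Function.Bijective f := by
      rw [Fintype.bijective_iff_injective_and_card]
      refine ⟨hinjf, ?_⟩
      rw [ZMod.card, ← Nat.card_eq_fintype_card, h5card]
    obtain ⟨y₁, hy₁⟩ := hbij.2 x₁
    obtain ⟨y₂, hy₂⟩ := hbij.2 x₂
    apply stmt_3_zmod5 y₁ y₂
    refine ⟨?_, ?_, ?_, ?_, ?_, ?_, ?_⟩ <;> intro h <;>
      [exact h1 (by rw [← hy₁, ← map_zero f, h]);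
       exact h2 (by rw [← hy₂, ← map_zero f, h]);
       exact h3 (by rw [← hy₁, ← map_zero f, ← h]; simp);
       exact h4 (by rw [← hy₂, ← map_zero f, ← h]; simp);
       exact h5 (by rw [← hy₁, ← hy₂, ← map_zero f, ← h]; simp);
       exact h6 (by rw [← hy₁, ← hy₂, ← map_zero f, ← h]; simp);
       exact h7 (by rw [← hy₁, ← hy₂, ← map_zero f, ← h]; simp)]
  · rintro (hinf | h4 | h7)
    · -- infinite case
      obtain ⟨a, ha⟩ := Infinite.exists_notMem_finset ({0, 1} : Finset F)
      simp only [Finset.mem_insert, Finset.mem_singleton, not_or] at ha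
      obtain ⟨ha0, ha1⟩ := ha
      obtain ⟨b, hb⟩ := Infinite.exists_notMem_finset
        ({0, 1, a, (a - 1) * a⁻¹, -(a - 1)⁻¹} : Finset F)
      simp only [Finset.mem_insert, Finset.mem_singleton, not_or] at hb
      obtain ⟨hb0, hb1, hba, hbc, hbd⟩ := hb
      refine ⟨a, b, ha0, hb0, sub_ne_zero.mpr ha1, sub_ne_zero.mpr hb1,
        sub_ne_zero.mpr (fun h => hba h.symm), ?_, ?_⟩
      · intro h
        apply hbc
        field_simp
        linear_combination h
      · intro h
        apply hbd
        have hsub : a - 1 ≠ 0 := sub_ne_zero.mpr ha1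
        field_simp
        linear_combination h
    · -- card 4 : characteristic 2
      have hfin : Finite F := Nat.finite_of_card_ne_zero (by omega)
      haveI : Fintype F := Fintype.ofFinite F
      obtain ⟨n, hp, hcard⟩ := FiniteField.card F (ringChar F)
      rw [← Nat.card_eq_fintype_card, h4] at hcard
      have hd2 : (2 : ℕ) ∣ ringChar F :=
        Nat.Prime.dvd_of_dvd_pow Nat.prime_two (by rw [← hcard]; norm_num)
      have hchar : ringChar F = 2 := by
        rcases (hp.eq_one_or_self_of_dvd 2 hd2) with h' | h'
        · omega
        · omega
      haveI : CharP F 2 := hchar ▸ ringChar.charP F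
      have h2 : (1 : F) + 1 = 0 := by
        rw [one_add_one_eq_two]
        exact_mod_cast CharP.cast_eq_zero F 2
      obtain ⟨a, ha⟩ := stmt_3_exists_notMem F {0, 1} (Or.inr (by
        rw [h4]
        have : ({0, 1} : Finset F).card ≤ 2 :=
          (Finset.card_insert_le _ _).trans (by simp)
        omega))
      simp only [Finset.mem_insert, Finset.mem_singleton, not_or] at ha
      exact stmt_3_char_two F h2 a ha.1 ha.2
    · -- card ≥ 7
      obtain ⟨a, ha⟩ := stmt_3_exists_notMem F {0, 1} (Or.inr (by
        have : ({0, 1} : Finset F).card ≤ 2 :=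
          (Finset.card_insert_le _ _).trans (by simp)
        omega))
      simp only [Finset.mem_insert, Finset.mem_singleton, not_or] at ha
      obtain ⟨ha0, ha1⟩ := ha
      obtain ⟨b, hb⟩ := stmt_3_exists_notMem F
        ({0, 1, a, (a - 1) * a⁻¹, -(a - 1)⁻¹} : Finset F) (Or.inr (by
          have : ({0, 1, a, (a - 1) * a⁻¹, -(a - 1)⁻¹} : Finset F).card ≤ 5 :=
            (Finset.card_insert_le _ _).trans (Nat.succ_le_succ
              ((Finset.card_insert_le _ _).trans (Nat.succ_le_succ
                ((Finset.card_insert_le _ _).trans (Nat.succ_le_succ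
                  ((Finset.card_insert_le _ _).trans (by simp)))))))
          omega))
      simp only [Finset.mem_insert, Finset.mem_singleton, not_or] at hb
      obtain ⟨hb0, hb1, hba, hbc, hbd⟩ := hb
      refine ⟨a, b, ha0, hb0, sub_ne_zero.mpr ha1, sub_ne_zero.mpr hb1,
        sub_ne_zero.mpr (fun h => hba h.symm), ?_, ?_⟩
      · intro h
        apply hbc
        field_simp
        linear_combination h
      · intro h
        apply hbd
        have hsub : a - 1 ≠ 0 := sub_ne_zero.mpr ha1
        field_simp
        linear_combination h
end

section
/- Let R be a commutative ring and let G be a subgroup of the group of units of R with −1 ∈ G. Call a matrix A over R a P-matrix (for the partial field P = (R, G)) if the determinant of every square submatrix of A lies in {0} ∪ G. If A is a P-matrix with rows indexed by a finite type m and columns indexed by a finite type n, then the block matrix [I | A] (the m × (m ⊕ n) matrix whose left block is the m × m identity matrix and whose right block is A) is also a P-matrix. -/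
/-- `A` is a `P`-matrix for the partial field `P = (R, G)`: the determinant of every
square submatrix of `A` lies in `{0} ∪ G`. -/
def IsPMatrix {R : Type*} [CommRing R] (G : Subgroup Rˣ) {m n : Type*}
    (A : Matrix m n R) : Prop :=
  ∀ (k : ℕ) (f : Fin k → m) (g : Fin k → n), Function.Injective f → Function.Injective g →
    (A.submatrix f g).det = 0 ∨ ∃ u : Rˣ, u ∈ G ∧ ((u : Rˣ) : R) = (A.submatrix f g).det

/-- If `A` is a `P`-matrix, then so is `[I | A]`. -/
theorem stmt_7 {R : Type*} [CommRing R] (G : Subgroup Rˣ) (hG : (-1 : Rˣ) ∈ G)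
    {m n : Type*} [Fintype m] [Fintype n] [DecidableEq m]
    (A : Matrix m n R) (hA : IsPMatrix G A) :
    IsPMatrix G (Matrix.fromCols (1 : Matrix m m R) A) := by
  intro k
  induction k with
  | zero =>
    intro f g hf hg
    right
    exact ⟨1, G.one_mem, by simp [Matrix.det_fin_zero]⟩
  | succ k ih =>
    intro f g hf hg
    by_cases hcase : ∃ j c, g j = Sum.inl c
    · obtain ⟨j, c, hj⟩ := hcase
      rw [Matrix.det_succ_column _ j]
      by_cases hc : ∃ i, f i = c
      · obtain ⟨i₀, hi₀⟩ := hc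
        rw [Finset.sum_eq_single i₀ (fun i _ hne => by
              have : f i ≠ c := fun h => hne (hf (h.trans hi₀.symm))
              simp [Matrix.submatrix_apply, hj, Matrix.one_apply, this])
            (fun h => absurd (Finset.mem_univ i₀) h)]
        have hentry : (Matrix.fromCols (1 : Matrix m m R) A).submatrix f g i₀ j = 1 := by
          simp [Matrix.submatrix_apply, hj, Matrix.one_apply, hi₀]
        rw [hentry, mul_one]
        have hf' : Function.Injective (f ∘ i₀.succAbove) :=
          hf.comp (Fin.succAbove_right_injective)
        have hg' : Function.Injective (g ∘ j.succAbove) :=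
          hg.comp (Fin.succAbove_right_injective)
        rcases ih (f ∘ i₀.succAbove) (g ∘ j.succAbove) hf' hg' with h0 | ⟨u, huG, hu⟩
        · left
          have : ((Matrix.fromCols (1 : Matrix m m R) A).submatrix f g).submatrix
              i₀.succAbove j.succAbove =
              (Matrix.fromCols (1 : Matrix m m R) A).submatrix (f ∘ i₀.succAbove)
                (g ∘ j.succAbove) := by
            ext i' j'; simp [Matrix.submatrix_apply]
          rw [this, h0, mul_zero]
        · right
          refine ⟨(-1) ^ ((i₀ : ℕ) + (j : ℕ)) * u,
            G.mul_mem (by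
              rcases Nat.even_or_odd ((i₀ : ℕ) + (j : ℕ)) with he | ho
              · rw [he.neg_one_pow]; exact G.one_mem
              · rw [ho.neg_one_pow]; exact hG) huG, ?_⟩
          have : ((Matrix.fromCols (1 : Matrix m m R) A).submatrix f g).submatrix
              i₀.succAbove j.succAbove =
              (Matrix.fromCols (1 : Matrix m m R) A).submatrix (f ∘ i₀.succAbove)
                (g ∘ j.succAbove) := by
            ext i' j'; simp [Matrix.submatrix_apply]
          rw [this, ← hu]
          push_cast
          ring
      · left
        apply Finset.sum_eq_zero
        intro i _
        have : f i ≠ c := fun h => hc ⟨i, h⟩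
        simp [Matrix.submatrix_apply, hj, Matrix.one_apply, this]
    · push_neg at hcase
      have hex : ∀ j, ∃ x, g j = Sum.inr x := by
        intro j
        cases h : g j with
        | inl c => exact absurd h (hcase j c)
        | inr x => exact ⟨x, rfl⟩
      choose g' hg' using hex
      have hg'inj : Function.Injective g' := by
        intro a b hab
        apply hg
        rw [hg' a, hg' b, hab]
      have : (Matrix.fromCols (1 : Matrix m m R) A).submatrix f g = A.submatrix f g' := by
        ext i j'
        simp [Matrix.submatrix_apply, hg' j']
      rw [this]
      exact hA _ f g' hf hg'inj
end

section
/- Let A be the 3 × 9 matrix over GF(4) with rows (1,0,0,1,1,0,α,α,1), (0,1,0,1,0,1,α,1,α), (0,0,1,0,1,1,1,0,1); its vector matroid is the matroid Y₉ (the Perles configuration). If a field F realizes the column matroid of A, then F contains an element z with z² = z + 1. (That is, Y₉ is representable over a field only if that field contains a root of x² − x − 1.) -/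
namespace PerlesAux

@[simp] lemma cons_val_five {m : ℕ} {α : Type*} (x : α) (u : Fin (m+5) → α) :
    Matrix.vecCons x u 5 = Matrix.vecHead (Matrix.vecTail (Matrix.vecTail (Matrix.vecTail (Matrix.vecTail u)))) := rfl
@[simp] lemma cons_val_six {m : ℕ} {α : Type*} (x : α) (u : Fin (m+6) → α) :
    Matrix.vecCons x u 6 = Matrix.vecHead (Matrix.vecTail (Matrix.vecTail (Matrix.vecTail (Matrix.vecTail (Matrix.vecTail u))))) := rfl
@[simp] lemma cons_val_seven {m : ℕ} {α : Type*} (x : α) (u : Fin (m+7) → α) :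
    Matrix.vecCons x u 7 = Matrix.vecHead (Matrix.vecTail (Matrix.vecTail (Matrix.vecTail (Matrix.vecTail (Matrix.vecTail (Matrix.vecTail u)))))) := rfl
@[simp] lemma cons_val_eight {m : ℕ} {α : Type*} (x : α) (u : Fin (m+8) → α) :
    Matrix.vecCons x u 8 = Matrix.vecHead (Matrix.vecTail (Matrix.vecTail (Matrix.vecTail (Matrix.vecTail (Matrix.vecTail (Matrix.vecTail (Matrix.vecTail u))))))) := rfl

lemma li_range {F V ι κ : Type*} [DivisionRing F] [AddCommGroup V] [Module F V]
    (v : κ → V) {f : ι → κ} (hf : Function.Injective f) :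
    LinearIndependent F (fun x : Set.range f => v x) ↔ LinearIndependent F (fun i => v (f i)) :=
  (linearIndependent_equiv (Equiv.ofInjective f hf) (f := fun x : Set.range f => v x)).symm

lemma li_iff_det {F : Type*} [Field F] {v : Fin 3 → Fin 3 → F} :
    LinearIndependent F v ↔ (Matrix.of v).det ≠ 0 :=
  Matrix.linearIndependent_rows_iff_isUnit.trans
    ((Matrix.isUnit_iff_isUnit_det _).trans isUnit_iff_ne_zero)

end PerlesAux

open PerlesAux

/-- A field `F` realizes the column matroid of a matrix `A` over `K` if some matrix `B`
over `F` with the same column index set has exactly the same linearly independent sets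
of columns as `A`. -/
def RealizesColumnMatroid {K : Type*} [Field K] {m k : ℕ}
    (A : Matrix (Fin m) (Fin k) K) (F : Type*) [Field F] : Prop :=
  ∃ (n : ℕ) (B : Matrix (Fin n) (Fin k) F),
    ∀ S : Set (Fin k),
      LinearIndependent F (fun j : S => B.transpose (j : Fin k)) ↔
        LinearIndependent K (fun j : S => A.transpose (j : Fin k))

set_option maxHeartbeats 2000000 in
/-- If a field `F` realizes the matroid `Y₉` (the Perles configuration), then `F`
contains a root of `x² − x − 1`. -/
theorem stmt_10 (α : GaloisField 2 2) (hα : α ^ 2 = α + 1) (F : Type*) [Field F]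
    (h : RealizesColumnMatroid
      (!![1, 0, 0, 1, 1, 0, α, α, 1;
          0, 1, 0, 1, 0, 1, α, 1, α;
          0, 0, 1, 0, 1, 1, 1, 0, 1] :
        Matrix (Fin 3) (Fin 9) (GaloisField 2 2)) F) :
    ∃ z : F, z ^ 2 = z + 1 := by
  classical
  obtain ⟨n, B, hB⟩ := h
  set A : Matrix (Fin 3) (Fin 9) (GaloisField 2 2) :=
    !![1, 0, 0, 1, 1, 0, α, α, 1;
       0, 1, 0, 1, 0, 1, α, 1, α;
       0, 0, 1, 0, 1, 1, 1, 0, 1] with hA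
  have h2 : (2 : GaloisField 2 2) = 0 := by
    exact_mod_cast CharP.cast_eq_zero (GaloisField 2 2) 2
  have hα0 : α ≠ 0 := by
    intro h0; rw [h0] at hα; simp at hα
  -- transfer between F and K
  have key : ∀ {m : ℕ} (f : Fin m → Fin 9), Function.Injective f →
      (LinearIndependent F (fun i => B.transpose (f i)) ↔
       LinearIndependent (GaloisField 2 2) (fun i => A.transpose (f i))) := by
    intro m f hf
    exact (li_range _ hf).symm.trans ((hB (Set.range f)).trans (li_range _ hf))
  -- any four columns of B are dependent
  have dep4 : ∀ f : Fin 4 → Fin 9, ¬ LinearIndependent F (fun i => B.transpose (f i)) := by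
    intro f hli
    have hf : Function.Injective f := fun i i' hii => by
      exact hli.injective (show (fun k => B.transpose (f k)) i = (fun k => B.transpose (f k)) i' by
        simp [hii])
    rw [key f hf] at hli
    have hc := hli.fintype_card_le_finrank
    rw [Module.finrank_pi] at hc
    simp at hc
  -- columns 0,1,2 of B are independent
  have li3 : LinearIndependent F ![B.transpose 0, B.transpose 1, B.transpose 2] := by
    have h012 := (key ![0,1,2] (by decide)).mpr
    have : LinearIndependent (GaloisField 2 2) (fun i => A.transpose ((![0,1,2] : Fin 3 → Fin 9) i)) := by
      rw [li_iff_det]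
      simp [hA, Matrix.det_fin_three, Matrix.vecHead, Matrix.vecTail, Matrix.transpose_apply]
    have hli := h012 this
    have he : (fun i => B.transpose ((![0,1,2] : Fin 3 → Fin 9) i))
        = ![B.transpose 0, B.transpose 1, B.transpose 2] := by
      funext i; fin_cases i <;> rfl
    rwa [he] at hli
  -- coordinates
  have hspan : ∀ j : Fin 9, ∃ c : Fin 3 → F,
      c 0 • B.transpose 0 + c 1 • B.transpose 1 + c 2 • B.transpose 2 = B.transpose j := by
    intro j
    have hd := dep4 ![0,1,2,j]
    have hsn : (fun i => B.transpose ((![0,1,2,j] : Fin 4 → Fin 9) i))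
        = (Fin.snoc ![B.transpose 0, B.transpose 1, B.transpose 2] (B.transpose j)) := by
      funext i; fin_cases i <;> simp [Fin.snoc] <;> rfl
    rw [hsn, linearIndependent_fin_snoc] at hd
    push_neg at hd
    have hmem := hd li3
    rw [Submodule.mem_span_range_iff_exists_fun] at hmem
    obtain ⟨c, hc⟩ := hmem
    refine ⟨c, ?_⟩
    simpa [Fin.sum_univ_three] using hc
  choose u hu using hspan
  -- the comparison linear map
  let φ : (Fin 3 → F) →ₗ[F] (Fin n → F) :=
    { toFun := fun x => x 0 • B.transpose 0 + x 1 • B.transpose 1 + x 2 • B.transpose 2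
      map_add' := by intro x y; simp only [Pi.add_apply, add_smul]; abel
      map_smul' := by intro c x; simp only [Pi.smul_apply, smul_eq_mul, RingHom.id_apply,
        smul_add, smul_smul]
      }
  have hφinj : Function.Injective φ := by
    intro x y hxy
    have h0 := Fintype.linearIndependent_iff.mp li3
    have hsum : ∑ i, (x - y) i • (![B.transpose 0, B.transpose 1, B.transpose 2]) i = 0 := by
      have : φ x - φ y = 0 := by rw [hxy]; simp
      calc ∑ i, (x - y) i • (![B.transpose 0, B.transpose 1, B.transpose 2]) i
          = φ x - φ y := by
            simp only [Fin.sum_univ_three, Pi.sub_apply, sub_smul]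
            show _ = (x 0 • B.transpose 0 + x 1 • B.transpose 1 + x 2 • B.transpose 2) -
              (y 0 • B.transpose 0 + y 1 • B.transpose 1 + y 2 • B.transpose 2)
            simp only [Matrix.cons_val_zero, Matrix.cons_val_one, Matrix.head_cons,
              Matrix.cons_val_two, Matrix.tail_cons]
            abel
        _ = 0 := this
    have hz := h0 (x - y) hsum
    funext i
    have := hz i
    simpa [sub_eq_zero] using this
  have hφu : ∀ j, φ (u j) = B.transpose j := fun j => hu j
  -- independence of triples of u's matches that of columns of B
  have trans3 : ∀ (f : Fin 3 → Fin 9),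
      (LinearIndependent F (fun i => u (f i)) ↔ LinearIndependent F (fun i => B.transpose (f i))) := by
    intro f
    constructor
    · intro hli
      have := hli.map' φ (LinearMap.ker_eq_bot.mpr hφinj)
      have he : (φ ∘ fun i => u (f i)) = (fun i => B.transpose (f i)) := by
        funext i; simp [hφu]
      rwa [he] at this
    · intro hli
      refine LinearIndependent.of_comp φ ?_
      have he : (φ ∘ fun i => u (f i)) = (fun i => B.transpose (f i)) := by
        funext i; simp [hφu]
      rwa [he]
  have main : ∀ (f : Fin 3 → Fin 9), Function.Injective f →
      ((Matrix.of fun i => u (f i)).det ≠ 0 ↔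
        (Matrix.of fun i => A.transpose (f i)).det ≠ 0) := by
    intro f hf
    rw [← li_iff_det, ← li_iff_det]
    exact (trans3 f).trans (key f hf)
  -- values of u at 0, 1, 2
  have h00 : u 0 = ![1, 0, 0] := by
    apply hφinj
    rw [hφu 0]
    show B.transpose 0 = (1:F) • B.transpose 0 + (0:F) • B.transpose 1 + (0:F) • B.transpose 2
    simp
  have h01 : u 1 = ![0, 1, 0] := by
    apply hφinj
    rw [hφu 1]
    show B.transpose 1 = (0:F) • B.transpose 0 + (1:F) • B.transpose 1 + (0:F) • B.transpose 2
    simp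
  have h02 : u 2 = ![0, 0, 1] := by
    apply hφinj
    rw [hφu 2]
    show B.transpose 2 = (0:F) • B.transpose 0 + (0:F) • B.transpose 1 + (1:F) • B.transpose 2
    simp
  have d124 : (Matrix.of fun i => u (![0, 1, 3] i)).det = 0 := by
    by_contra hne
    refine (main ![0, 1, 3] (by decide)).mp hne ?_
    simp [hA, Matrix.det_fin_three, Matrix.vecHead, Matrix.vecTail, Matrix.transpose_apply, Function.comp]
  have d135 : (Matrix.of fun i => u (![0, 2, 4] i)).det = 0 := by
    by_contra hne
    refine (main ![0, 2, 4] (by decide)).mp hne ?_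
    simp [hA, Matrix.det_fin_three, Matrix.vecHead, Matrix.vecTail, Matrix.transpose_apply, Function.comp]
  have d236 : (Matrix.of fun i => u (![1, 2, 5] i)).det = 0 := by
    by_contra hne
    refine (main ![1, 2, 5] (by decide)).mp hne ?_
    simp [hA, Matrix.det_fin_three, Matrix.vecHead, Matrix.vecTail, Matrix.transpose_apply, Function.comp]
  have d128 : (Matrix.of fun i => u (![0, 1, 7] i)).det = 0 := by
    by_contra hne
    refine (main ![0, 1, 7] (by decide)).mp hne ?_
    simp [hA, Matrix.det_fin_three, Matrix.vecHead, Matrix.vecTail, Matrix.transpose_apply, Function.comp]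
  have d347 : (Matrix.of fun i => u (![2, 3, 6] i)).det = 0 := by
    by_contra hne
    refine (main ![2, 3, 6] (by decide)).mp hne ?_
    simp [hA, Matrix.det_fin_three, Matrix.vecHead, Matrix.vecTail, Matrix.transpose_apply, Function.comp]
  have d456 : (Matrix.of fun i => u (![3, 4, 5] i)).det = 0 := by
    by_contra hne
    refine (main ![3, 4, 5] (by decide)).mp hne ?_
    simp [hA, Matrix.det_fin_three, Matrix.vecHead, Matrix.vecTail, Matrix.transpose_apply, Function.comp]
    linear_combination -h2
  have d259 : (Matrix.of fun i => u (![1, 4, 8] i)).det = 0 := by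
    by_contra hne
    refine (main ![1, 4, 8] (by decide)).mp hne ?_
    simp [hA, Matrix.det_fin_three, Matrix.vecHead, Matrix.vecTail, Matrix.transpose_apply, Function.comp]
  have d179 : (Matrix.of fun i => u (![0, 6, 8] i)).det = 0 := by
    by_contra hne
    refine (main ![0, 6, 8] (by decide)).mp hne ?_
    simp [hA, Matrix.det_fin_three, Matrix.vecHead, Matrix.vecTail, Matrix.transpose_apply, Function.comp]
  have d578 : (Matrix.of fun i => u (![4, 6, 7] i)).det = 0 := by
    by_contra hne
    refine (main ![4, 6, 7] (by decide)).mp hne ?_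
    simp [hA, Matrix.det_fin_three, Matrix.vecHead, Matrix.vecTail, Matrix.transpose_apply, Function.comp]
    linear_combination -hα - h2
  have d689 : (Matrix.of fun i => u (![5, 7, 8] i)).det = 0 := by
    by_contra hne
    refine (main ![5, 7, 8] (by decide)).mp hne ?_
    simp [hA, Matrix.det_fin_three, Matrix.vecHead, Matrix.vecTail, Matrix.transpose_apply, Function.comp]
    linear_combination hα
  have n234 : (Matrix.of fun i => u (![1, 2, 3] i)).det ≠ 0 := by
    refine (main ![1, 2, 3] (by decide)).mpr ?_
    simp [hA, Matrix.det_fin_three, Matrix.vecHead, Matrix.vecTail, Matrix.transpose_apply, Function.comp]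
  have n134 : (Matrix.of fun i => u (![0, 2, 3] i)).det ≠ 0 := by
    refine (main ![0, 2, 3] (by decide)).mpr ?_
    simp [hA, Matrix.det_fin_three, Matrix.vecHead, Matrix.vecTail, Matrix.transpose_apply, Function.comp]
  have n235 : (Matrix.of fun i => u (![1, 2, 4] i)).det ≠ 0 := by
    refine (main ![1, 2, 4] (by decide)).mpr ?_
    simp [hA, Matrix.det_fin_three, Matrix.vecHead, Matrix.vecTail, Matrix.transpose_apply, Function.comp]
  have n125 : (Matrix.of fun i => u (![0, 1, 4] i)).det ≠ 0 := by
    refine (main ![0, 1, 4] (by decide)).mpr ?_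
    simp [hA, Matrix.det_fin_three, Matrix.vecHead, Matrix.vecTail, Matrix.transpose_apply, Function.comp]
  have n136 : (Matrix.of fun i => u (![0, 2, 5] i)).det ≠ 0 := by
    refine (main ![0, 2, 5] (by decide)).mpr ?_
    simp [hA, Matrix.det_fin_three, Matrix.vecHead, Matrix.vecTail, Matrix.transpose_apply, Function.comp]
  have n126 : (Matrix.of fun i => u (![0, 1, 5] i)).det ≠ 0 := by
    refine (main ![0, 1, 5] (by decide)).mpr ?_
    simp [hA, Matrix.det_fin_three, Matrix.vecHead, Matrix.vecTail, Matrix.transpose_apply, Function.comp]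
  have n237 : (Matrix.of fun i => u (![1, 2, 6] i)).det ≠ 0 := by
    refine (main ![1, 2, 6] (by decide)).mpr ?_
    simp [hA, Matrix.det_fin_three, Matrix.vecHead, Matrix.vecTail, Matrix.transpose_apply, Function.comp]
    exact hα0
  have n238 : (Matrix.of fun i => u (![1, 2, 7] i)).det ≠ 0 := by
    refine (main ![1, 2, 7] (by decide)).mpr ?_
    simp [hA, Matrix.det_fin_three, Matrix.vecHead, Matrix.vecTail, Matrix.transpose_apply, Function.comp]
    exact hα0
  have n138 : (Matrix.of fun i => u (![0, 2, 7] i)).det ≠ 0 := by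
    refine (main ![0, 2, 7] (by decide)).mpr ?_
    simp [hA, Matrix.det_fin_three, Matrix.vecHead, Matrix.vecTail, Matrix.transpose_apply, Function.comp]
  have n239 : (Matrix.of fun i => u (![1, 2, 8] i)).det ≠ 0 := by
    refine (main ![1, 2, 8] (by decide)).mpr ?_
    simp [hA, Matrix.det_fin_three, Matrix.vecHead, Matrix.vecTail, Matrix.transpose_apply, Function.comp]
  simp [Matrix.det_fin_three, h00, h01, h02, Matrix.vecHead, Matrix.vecTail] at d124
  simp [Matrix.det_fin_three, h00, h01, h02, Matrix.vecHead, Matrix.vecTail] at d135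
  simp [Matrix.det_fin_three, h00, h01, h02, Matrix.vecHead, Matrix.vecTail] at d236
  simp [Matrix.det_fin_three, h00, h01, h02, Matrix.vecHead, Matrix.vecTail] at d128
  simp [Matrix.det_fin_three, h00, h01, h02, Matrix.vecHead, Matrix.vecTail] at d347
  simp [Matrix.det_fin_three, h00, h01, h02, Matrix.vecHead, Matrix.vecTail] at d456
  simp [Matrix.det_fin_three, h00, h01, h02, Matrix.vecHead, Matrix.vecTail] at d259
  simp [Matrix.det_fin_three, h00, h01, h02, Matrix.vecHead, Matrix.vecTail] at d179
  simp [Matrix.det_fin_three, h00, h01, h02, Matrix.vecHead, Matrix.vecTail] at d578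
  simp [Matrix.det_fin_three, h00, h01, h02, Matrix.vecHead, Matrix.vecTail] at d689
  simp [Matrix.det_fin_three, h00, h01, h02, Matrix.vecHead, Matrix.vecTail] at n234
  simp [Matrix.det_fin_three, h00, h01, h02, Matrix.vecHead, Matrix.vecTail] at n134
  simp [Matrix.det_fin_three, h00, h01, h02, Matrix.vecHead, Matrix.vecTail] at n235
  simp [Matrix.det_fin_three, h00, h01, h02, Matrix.vecHead, Matrix.vecTail] at n125
  simp [Matrix.det_fin_three, h00, h01, h02, Matrix.vecHead, Matrix.vecTail] at n136
  simp [Matrix.det_fin_three, h00, h01, h02, Matrix.vecHead, Matrix.vecTail] at n126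
  simp [Matrix.det_fin_three, h00, h01, h02, Matrix.vecHead, Matrix.vecTail] at n237
  simp [Matrix.det_fin_three, h00, h01, h02, Matrix.vecHead, Matrix.vecTail] at n238
  simp [Matrix.det_fin_three, h00, h01, h02, Matrix.vecHead, Matrix.vecTail] at n138
  simp [Matrix.det_fin_three, h00, h01, h02, Matrix.vecHead, Matrix.vecTail] at n239
  -- scalar algebra
  have E456 : u 3 0 * u 4 2 * u 5 1 + u 3 1 * u 4 0 * u 5 2 = 0 := by
    linear_combination -d456 + (u 4 0 * u 5 1 - u 4 1 * u 5 0) * d124 + (u 3 1 * u 4 2) * d236 +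
      (u 3 0 * u 5 2) * d135
  have E578 : u 4 0 * u 6 2 * u 7 1 - u 4 2 * u 6 0 * u 7 1 + u 4 2 * u 6 1 * u 7 0 = 0 := by
    linear_combination -d578 + (u 6 2 * u 7 0 - u 6 0 * u 7 2) * d135 + (u 4 0 * u 6 1) * d128
  have E689 : -(u 5 1 * u 7 0 * u 8 2) + u 5 2 * u 7 0 * u 8 1 - u 5 2 * u 7 1 * u 8 0 = 0 := by
    linear_combination d689 + (u 7 2 * u 8 1 - u 7 1 * u 8 2) * d236 - (u 5 1 * u 8 0) * d128
  have K1 : u 3 0 * u 5 1 * u 8 2 + u 3 1 * u 5 2 * u 8 0 = 0 :=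
    mul_left_cancel₀ n235 (show u 4 0 * (u 3 0 * u 5 1 * u 8 2 + u 3 1 * u 5 2 * u 8 0) = u 4 0 * 0 by
      linear_combination -(u 3 0 * u 5 1) * d259 + (u 8 0) * E456)
  have K2 : u 3 0 * u 7 0 * u 8 1 - u 8 0 * (u 3 0 * u 7 1 - u 7 0 * u 3 1) = 0 :=
    mul_left_cancel₀ n126 (show u 5 2 * (u 3 0 * u 7 0 * u 8 1 - u 8 0 * (u 3 0 * u 7 1 - u 7 0 * u 3 1)) = u 5 2 * 0 by
      linear_combination (u 3 0) * E689 + (u 7 0) * K1)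
  have K3 : (u 3 0)^2 * u 5 1 * u 6 2 * u 7 1 + u 3 1 * u 5 2 * u 6 0 * (u 3 0 * u 7 1 - u 3 1 * u 7 0) = 0 :=
    mul_left_cancel₀ n235 (show u 4 0 * ((u 3 0)^2 * u 5 1 * u 6 2 * u 7 1 + u 3 1 * u 5 2 * u 6 0 * (u 3 0 * u 7 1 - u 3 1 * u 7 0)) = u 4 0 * 0 by
      linear_combination ((u 3 0)^2 * u 5 1) * E578 + (u 3 0 * u 6 0 * u 7 1 - u 3 0 * u 6 1 * u 7 0) * E456 +
        (u 3 1 * u 4 0 * u 5 2 * u 7 0) * d347)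
  have pre : u 3 1 * u 5 2 * u 6 0 * u 8 0 * (((u 3 0 * u 7 1 - u 7 0 * u 3 1))^2 - u 3 0 * u 7 0 * u 3 1 * u 7 1) = 0 := by
    linear_combination ((u 3 0)^3 * u 5 1 * u 7 0 * u 7 1) * d179 - ((u 3 0)^2 * u 6 1 * u 7 0 * u 7 1) * K1 +
      (u 3 0 * u 3 1 * u 5 2 * u 7 0 * u 7 1 * u 8 0) * d347 + ((u 3 0)^2 * u 5 1 * u 6 2 * u 7 1) * K2 +
      (u 8 0 * (u 3 0 * u 7 1 - u 7 0 * u 3 1)) * K3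
  have hprod : u 3 1 * u 5 2 * u 6 0 * u 8 0 ≠ 0 :=
    mul_ne_zero (mul_ne_zero (mul_ne_zero n134 n126) n237) n239
  have keyEq : (u 3 0 * u 7 1 - u 7 0 * u 3 1)^2 = u 3 0 * u 7 0 * u 3 1 * u 7 1 := by
    have hz := (mul_eq_zero.mp pre).resolve_left hprod
    linear_combination hz
  have hb : u 3 1 * u 7 0 ≠ 0 := mul_ne_zero n134 n238
  refine ⟨(u 3 0 * u 7 1 - u 7 0 * u 3 1) / (u 3 1 * u 7 0), ?_⟩
  rw [div_pow, div_add' _ _ _ hb, div_eq_div_iff (pow_ne_zero 2 hb) hb]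
  linear_combination (u 3 1 * u 7 0) * keyEq
end

section
/- Let A be the 3 × 9 matrix over GF(4) with rows (1,0,0,1,0,1,1,1,1), (0,1,0,1,1,α²,α²,α,0), (0,0,1,0,1,1,α,1,α); its vector matroid is the matroid V₁. If a field F realizes the column matroid of A, then F has characteristic 2. (That is, the characteristic set of V₁ is {2}.) -/
section Helpers

variable {R : Type*} [Field R] {V : Type*} [AddCommGroup V] [Module R V]

lemma StmtEleven.li_range_iff {ι : Type*} (f : ι → V) {m : ℕ} (g : Fin m → ι)
    (hg : Function.Injective g) :
    LinearIndependent R (fun j : (Set.range g) => f (j : ι)) ↔ LinearIndependent R (f ∘ g) :=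
  Iff.symm <| linearIndependent_equiv' (Equiv.ofInjective g hg) (by funext i; rfl)

lemma StmtEleven.comp_vec3 {β γ : Type*} (f : β → γ) (a b c : β) :
    f ∘ ![a, b, c] = ![f a, f b, f c] := by
  funext i; fin_cases i <;> rfl

lemma StmtEleven.comp_vec4 {β γ : Type*} (f : β → γ) (a b c d : β) :
    f ∘ ![a, b, c, d] = ![f a, f b, f c, f d] := by
  funext i; fin_cases i <;> rfl

lemma StmtEleven.li3_coeffs {b0 b1 b2 : V} (h : LinearIndependent R ![b0, b1, b2])
    {c0 c1 c2 : R} (hc : c0 • b0 + c1 • b1 + c2 • b2 = 0) : c0 = 0 ∧ c1 = 0 ∧ c2 = 0 := by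
  have := Fintype.linearIndependent_iff.1 h ![c0, c1, c2]
    (by rw [Fin.sum_univ_three]; simpa using hc)
  exact ⟨this 0, this 1, this 2⟩

lemma StmtEleven.ne_of_li {u w t : V} (h : LinearIndependent R ![u, w, t]) {p q : R}
    (ht : t = p • u + q • w) : False := by
  obtain ⟨h0, h1, h2⟩ := StmtEleven.li3_coeffs h (c0 := p) (c1 := q) (c2 := -1)
    (by rw [ht]; module)
  simpa using h2

lemma StmtEleven.dep3_coeffs {a b c : V} (hd : ¬ LinearIndependent R ![a, b, c]) :
    ∃ g : Fin 3 → R, (g 0 • a + g 1 • b + g 2 • c = 0) ∧ (g 0 ≠ 0 ∨ g 1 ≠ 0 ∨ g 2 ≠ 0) := by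
  obtain ⟨g, hsum, i, hi⟩ := Fintype.not_linearIndependent_iff.1 hd
  rw [Fin.sum_univ_three] at hsum
  simp only [Matrix.cons_val_zero, Matrix.cons_val_one, Matrix.head_cons] at hsum
  refine ⟨g, ?_, ?_⟩
  · convert hsum using 3 <;> simp
  · fin_cases i
    exacts [Or.inl hi, Or.inr (Or.inl hi), Or.inr (Or.inr hi)]

lemma StmtEleven.exists_coords {b0 b1 b2 x : V} (h3 : LinearIndependent R ![b0, b1, b2])
    (hd : ¬ LinearIndependent R ![b0, b1, b2, x]) :
    ∃ p q r : R, x = p • b0 + q • b1 + r • b2 := by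
  obtain ⟨g, hsum, i, hi⟩ := Fintype.not_linearIndependent_iff.1 hd
  rw [Fin.sum_univ_four] at hsum
  have hsum' : g 0 • b0 + g 1 • b1 + g 2 • b2 + g 3 • x = 0 := by
    convert hsum using 4 <;> simp
  by_cases h3' : g 3 = 0
  · exfalso
    rw [h3', zero_smul, add_zero] at hsum'
    obtain ⟨e0, e1, e2⟩ := StmtEleven.li3_coeffs h3 hsum'
    fin_cases i <;> simp_all
  · refine ⟨-(g 0 / g 3), -(g 1 / g 3), -(g 2 / g 3), ?_⟩
    have hx : g 3 • x = (-(g 0)) • b0 + (-(g 1)) • b1 + (-(g 2)) • b2 := by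
      linear_combination (norm := module) hsum'
    calc x = (g 3)⁻¹ • (g 3 • x) := by rw [smul_smul, inv_mul_cancel₀ h3', one_smul]
    _ = _ := by rw [hx]; match_scalars <;> field_simp

lemma StmtEleven.dep_rel {b0 b1 b2 : V} (h3 : LinearIndependent R ![b0, b1, b2])
    {u v w : V} (hd : ¬ LinearIndependent R ![u, v, w])
    {pu qu ru pv qv rv pw qw rw' : R}
    (hu : u = pu • b0 + qu • b1 + ru • b2)
    (hv : v = pv • b0 + qv • b1 + rv • b2)
    (hw : w = pw • b0 + qw • b1 + rw' • b2) :
    ∃ g : Fin 3 → R, (g 0 ≠ 0 ∨ g 1 ≠ 0 ∨ g 2 ≠ 0) ∧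
      g 0 * pu + g 1 * pv + g 2 * pw = 0 ∧
      g 0 * qu + g 1 * qv + g 2 * qw = 0 ∧
      g 0 * ru + g 1 * rv + g 2 * rw' = 0 := by
  obtain ⟨g, hsum, hne⟩ := StmtEleven.dep3_coeffs hd
  have hb : (g 0 * pu + g 1 * pv + g 2 * pw) • b0 + (g 0 * qu + g 1 * qv + g 2 * qw) • b1
      + (g 0 * ru + g 1 * rv + g 2 * rw') • b2 = 0 := by
    linear_combination (norm := module) hsum - g 0 • hu - g 1 • hv - g 2 • hw
  obtain ⟨e0, e1, e2⟩ := StmtEleven.li3_coeffs h3 hb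
  exact ⟨g, hne, e0, e1, e2⟩

lemma StmtEleven.liA {t : Fin 3 → R} (ht : t 2 ≠ 0) :
    LinearIndependent R ![![1, 0, 0], ![0, 1, 0], t] := by
  apply Fintype.linearIndependent_iff.mpr
  intro g hg
  rw [Fin.sum_univ_three] at hg
  have h0 := congr_fun hg 0
  have h1 := congr_fun hg 1
  have h2 := congr_fun hg 2
  simp at h0 h1 h2
  have hg2 : g 2 = 0 := h2.resolve_right ht
  intro i; fin_cases i
  · simpa [hg2] using h0
  · simpa [hg2] using h1
  · exact hg2

lemma StmtEleven.liB {t : Fin 3 → R} (ht : t 1 ≠ 0) :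
    LinearIndependent R ![![1, 0, 0], ![0, 0, 1], t] := by
  apply Fintype.linearIndependent_iff.mpr
  intro g hg
  rw [Fin.sum_univ_three] at hg
  have h0 := congr_fun hg 0
  have h1 := congr_fun hg 1
  have h2 := congr_fun hg 2
  simp at h0 h1 h2
  have hg2 : g 2 = 0 := h1.resolve_right ht
  intro i; fin_cases i
  · simpa [hg2] using h0
  · simpa [hg2] using h2
  · exact hg2

lemma StmtEleven.liC {t : Fin 3 → R} (ht : t 0 ≠ 0) :
    LinearIndependent R ![![0, 1, 0], ![0, 0, 1], t] := by
  apply Fintype.linearIndependent_iff.mpr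
  intro g hg
  rw [Fin.sum_univ_three] at hg
  have h0 := congr_fun hg 0
  have h1 := congr_fun hg 1
  have h2 := congr_fun hg 2
  simp at h0 h1 h2
  have hg2 : g 2 = 0 := h0.resolve_right ht
  intro i; fin_cases i
  · simpa [hg2] using h1
  · simpa [hg2] using h2
  · exact hg2

end Helpers

open StmtEleven in
/-- If a field `F` realizes the matroid `V₁`, then `F` has characteristic 2: the
characteristic set of `V₁` is `{2}`. -/
theorem stmt_11 (α : GaloisField 2 2) (hα : α ^ 2 = α + 1) (F : Type*) [Field F]
    (h : RealizesColumnMatroid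
      (!![1, 0, 0, 1, 0, 1, 1, 1, 1;
          0, 1, 0, 1, 1, α ^ 2, α ^ 2, α, 0;
          0, 0, 1, 0, 1, 1, α, 1, α] :
        Matrix (Fin 3) (Fin 9) (GaloisField 2 2)) F) :
    CharP F 2 := by
  classical
  obtain ⟨n, B, hB⟩ := h
  set M : Matrix (Fin 3) (Fin 9) (GaloisField 2 2) :=
    !![1, 0, 0, 1, 0, 1, 1, 1, 1;
       0, 1, 0, 1, 1, α ^ 2, α ^ 2, α, 0;
       0, 0, 1, 0, 1, 1, α, 1, α] with hM
  set v : Fin 9 → Fin n → F := B.transpose with hv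
  -- basic facts about K = GF(4)
  have h2K : (2 : GaloisField 2 2) = 0 := by
    have : ((2 : ℕ) : GaloisField 2 2) = 0 := CharP.cast_eq_zero (GaloisField 2 2) 2
    simpa using this
  have hα0 : α ≠ 0 := by intro hc; rw [hc] at hα; simp at hα
  have hα2 : α ^ 2 ≠ 0 := pow_ne_zero 2 hα0
  -- the columns of M
  have hcol0 : M.transpose 0 = ![(1 : GaloisField 2 2), 0, 0] := by rw [hM]; funext i; fin_cases i <;> rfl
  have hcol1 : M.transpose 1 = ![(0 : GaloisField 2 2), 1, 0] := by rw [hM]; funext i; fin_cases i <;> rfl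
  have hcol2 : M.transpose 2 = ![(0 : GaloisField 2 2), 0, 1] := by rw [hM]; funext i; fin_cases i <;> rfl
  have hcol3 : M.transpose 3 = ![(1 : GaloisField 2 2), 1, 0] := by rw [hM]; funext i; fin_cases i <;> rfl
  have hcol4 : M.transpose 4 = ![(0 : GaloisField 2 2), 1, 1] := by rw [hM]; funext i; fin_cases i <;> rfl
  have hcol5 : M.transpose 5 = ![(1 : GaloisField 2 2), α ^ 2, 1] := by rw [hM]; funext i; fin_cases i <;> rfl
  have hcol6 : M.transpose 6 = ![(1 : GaloisField 2 2), α ^ 2, α] := by rw [hM]; funext i; fin_cases i <;> rfl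
  have hcol7 : M.transpose 7 = ![(1 : GaloisField 2 2), α, 1] := by rw [hM]; funext i; fin_cases i <;> rfl
  have hcol8 : M.transpose 8 = ![(1 : GaloisField 2 2), 0, α] := by rw [hM]; funext i; fin_cases i <;> rfl
  -- the transfer principle
  have transfer : ∀ {m : ℕ} (g : Fin m → Fin 9), Function.Injective g →
      (LinearIndependent F (v ∘ g) ↔ LinearIndependent (GaloisField 2 2) (M.transpose ∘ g)) := by
    intro m g hg
    have h' := hB (Set.range g)
    rwa [li_range_iff _ g hg, li_range_iff (M.transpose : Fin 9 → Fin 3 → GaloisField 2 2) g hg] at h'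
  -- independent triples, transferred to F
  have I012 : LinearIndependent F ![v 0, v 1, v 2] := by
    rw [← comp_vec3 v 0 1 2, transfer ![0,1,2] (by decide), comp_vec3 (M.transpose : Fin 9 → Fin 3 → GaloisField 2 2), hcol0, hcol1, hcol2]
    exact liA one_ne_zero
  have I123 : LinearIndependent F ![v 1, v 2, v 3] := by
    rw [← comp_vec3 v 1 2 3, transfer ![1,2,3] (by decide), comp_vec3 (M.transpose : Fin 9 → Fin 3 → GaloisField 2 2), hcol1, hcol2, hcol3]
    exact liC one_ne_zero
  have I023 : LinearIndependent F ![v 0, v 2, v 3] := by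
    rw [← comp_vec3 v 0 2 3, transfer ![0,2,3] (by decide), comp_vec3 (M.transpose : Fin 9 → Fin 3 → GaloisField 2 2), hcol0, hcol2, hcol3]
    exact liB one_ne_zero
  have I024 : LinearIndependent F ![v 0, v 2, v 4] := by
    rw [← comp_vec3 v 0 2 4, transfer ![0,2,4] (by decide), comp_vec3 (M.transpose : Fin 9 → Fin 3 → GaloisField 2 2), hcol0, hcol2, hcol4]
    exact liB one_ne_zero
  have I014 : LinearIndependent F ![v 0, v 1, v 4] := by
    rw [← comp_vec3 v 0 1 4, transfer ![0,1,4] (by decide), comp_vec3 (M.transpose : Fin 9 → Fin 3 → GaloisField 2 2), hcol0, hcol1, hcol4]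
    exact liA one_ne_zero
  have I015 : LinearIndependent F ![v 0, v 1, v 5] := by
    rw [← comp_vec3 v 0 1 5, transfer ![0,1,5] (by decide), comp_vec3 (M.transpose : Fin 9 → Fin 3 → GaloisField 2 2), hcol0, hcol1, hcol5]
    exact liA one_ne_zero
  have I126 : LinearIndependent F ![v 1, v 2, v 6] := by
    rw [← comp_vec3 v 1 2 6, transfer ![1,2,6] (by decide), comp_vec3 (M.transpose : Fin 9 → Fin 3 → GaloisField 2 2), hcol1, hcol2, hcol6]
    exact liC one_ne_zero
  have I026 : LinearIndependent F ![v 0, v 2, v 6] := by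
    rw [← comp_vec3 v 0 2 6, transfer ![0,2,6] (by decide), comp_vec3 (M.transpose : Fin 9 → Fin 3 → GaloisField 2 2), hcol0, hcol2, hcol6]
    exact liB hα2
  have I127 : LinearIndependent F ![v 1, v 2, v 7] := by
    rw [← comp_vec3 v 1 2 7, transfer ![1,2,7] (by decide), comp_vec3 (M.transpose : Fin 9 → Fin 3 → GaloisField 2 2), hcol1, hcol2, hcol7]
    exact liC one_ne_zero
  have I027 : LinearIndependent F ![v 0, v 2, v 7] := by
    rw [← comp_vec3 v 0 2 7, transfer ![0,2,7] (by decide), comp_vec3 (M.transpose : Fin 9 → Fin 3 → GaloisField 2 2), hcol0, hcol2, hcol7]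
    exact liB hα0
  have I017 : LinearIndependent F ![v 0, v 1, v 7] := by
    rw [← comp_vec3 v 0 1 7, transfer ![0,1,7] (by decide), comp_vec3 (M.transpose : Fin 9 → Fin 3 → GaloisField 2 2), hcol0, hcol1, hcol7]
    exact liA one_ne_zero
  have I128 : LinearIndependent F ![v 1, v 2, v 8] := by
    rw [← comp_vec3 v 1 2 8, transfer ![1,2,8] (by decide), comp_vec3 (M.transpose : Fin 9 → Fin 3 → GaloisField 2 2), hcol1, hcol2, hcol8]
    exact liC one_ne_zero
  have I018 : LinearIndependent F ![v 0, v 1, v 8] := by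
    rw [← comp_vec3 v 0 1 8, transfer ![0,1,8] (by decide), comp_vec3 (M.transpose : Fin 9 → Fin 3 → GaloisField 2 2), hcol0, hcol1, hcol8]
    exact liA hα0
  -- dependent triples, transferred to F
  have D013 : ¬ LinearIndependent F ![v 0, v 1, v 3] := by
    rw [← comp_vec3 v 0 1 3, transfer ![0,1,3] (by decide), comp_vec3 (M.transpose : Fin 9 → Fin 3 → GaloisField 2 2), hcol0, hcol1, hcol3]
    apply Fintype.not_linearIndependent_iff.2
    refine ⟨![1, 1, -1], ?_, 0, one_ne_zero⟩
    rw [Fin.sum_univ_three]; funext i; fin_cases i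
    · show (1 : GaloisField 2 2) * 1 + 1 * 0 + (-1) * 1 = 0; ring
    · show (1 : GaloisField 2 2) * 0 + 1 * 1 + (-1) * 1 = 0; ring
    · show (1 : GaloisField 2 2) * 0 + 1 * 0 + (-1) * 0 = 0; ring
  have D124 : ¬ LinearIndependent F ![v 1, v 2, v 4] := by
    rw [← comp_vec3 v 1 2 4, transfer ![1,2,4] (by decide), comp_vec3 (M.transpose : Fin 9 → Fin 3 → GaloisField 2 2), hcol1, hcol2, hcol4]
    apply Fintype.not_linearIndependent_iff.2
    refine ⟨![1, 1, -1], ?_, 0, one_ne_zero⟩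
    rw [Fin.sum_univ_three]; funext i; fin_cases i
    · show (1 : GaloisField 2 2) * 0 + 1 * 0 + (-1) * 0 = 0; ring
    · show (1 : GaloisField 2 2) * 1 + 1 * 0 + (-1) * 1 = 0; ring
    · show (1 : GaloisField 2 2) * 0 + 1 * 1 + (-1) * 1 = 0; ring
  have D028 : ¬ LinearIndependent F ![v 0, v 2, v 8] := by
    rw [← comp_vec3 v 0 2 8, transfer ![0,2,8] (by decide), comp_vec3 (M.transpose : Fin 9 → Fin 3 → GaloisField 2 2), hcol0, hcol2, hcol8]
    apply Fintype.not_linearIndependent_iff.2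
    refine ⟨![1, α, -1], ?_, 0, one_ne_zero⟩
    rw [Fin.sum_univ_three]; funext i; fin_cases i
    · show (1 : GaloisField 2 2) * 1 + α * 0 + (-1) * 1 = 0; ring
    · show (1 : GaloisField 2 2) * 0 + α * 0 + (-1) * 0 = 0; ring
    · show (1 : GaloisField 2 2) * 0 + α * 1 + (-1) * α = 0; ring
  have D067 : ¬ LinearIndependent F ![v 0, v 6, v 7] := by
    rw [← comp_vec3 v 0 6 7, transfer ![0,6,7] (by decide), comp_vec3 (M.transpose : Fin 9 → Fin 3 → GaloisField 2 2), hcol0, hcol6, hcol7]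
    apply Fintype.not_linearIndependent_iff.2
    refine ⟨![1 - α, -1, α], ?_, 1, neg_ne_zero.mpr one_ne_zero⟩
    rw [Fin.sum_univ_three]; funext i; fin_cases i
    · show (1 - α) * 1 + (-1) * 1 + α * 1 = 0; ring
    · show (1 - α) * 0 + (-1) * α ^ 2 + α * α = 0; ring
    · show (1 - α) * 0 + (-1) * α + α * 1 = 0; ring
  have D157 : ¬ LinearIndependent F ![v 1, v 5, v 7] := by
    rw [← comp_vec3 v 1 5 7, transfer ![1,5,7] (by decide), comp_vec3 (M.transpose : Fin 9 → Fin 3 → GaloisField 2 2), hcol1, hcol5, hcol7]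
    apply Fintype.not_linearIndependent_iff.2
    refine ⟨![-1, 1, -1], ?_, 1, one_ne_zero⟩
    rw [Fin.sum_univ_three]; funext i; fin_cases i
    · show (-1 : GaloisField 2 2) * 0 + 1 * 1 + (-1) * 1 = 0; ring
    · show (-1 : GaloisField 2 2) * 1 + 1 * α ^ 2 + (-1) * α = 0; linear_combination hα
    · show (-1 : GaloisField 2 2) * 0 + 1 * 1 + (-1) * 1 = 0; ring
  have D168 : ¬ LinearIndependent F ![v 1, v 6, v 8] := by
    rw [← comp_vec3 v 1 6 8, transfer ![1,6,8] (by decide), comp_vec3 (M.transpose : Fin 9 → Fin 3 → GaloisField 2 2), hcol1, hcol6, hcol8]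
    apply Fintype.not_linearIndependent_iff.2
    refine ⟨![-α ^ 2, 1, -1], ?_, 1, one_ne_zero⟩
    rw [Fin.sum_univ_three]; funext i; fin_cases i
    · show (-α ^ 2) * 0 + 1 * 1 + (-1) * 1 = 0; ring
    · show (-α ^ 2) * 1 + 1 * α ^ 2 + (-1) * 0 = 0; ring
    · show (-α ^ 2) * 0 + 1 * α + (-1) * α = 0; ring
  have D256 : ¬ LinearIndependent F ![v 2, v 5, v 6] := by
    rw [← comp_vec3 v 2 5 6, transfer ![2,5,6] (by decide), comp_vec3 (M.transpose : Fin 9 → Fin 3 → GaloisField 2 2), hcol2, hcol5, hcol6]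
    apply Fintype.not_linearIndependent_iff.2
    refine ⟨![α - 1, 1, -1], ?_, 1, one_ne_zero⟩
    rw [Fin.sum_univ_three]; funext i; fin_cases i
    · show (α - 1) * 0 + 1 * 1 + (-1) * 1 = 0; ring
    · show (α - 1) * 0 + 1 * α ^ 2 + (-1) * α ^ 2 = 0; ring
    · show (α - 1) * 1 + 1 * 1 + (-1) * α = 0; ring
  have D346 : ¬ LinearIndependent F ![v 3, v 4, v 6] := by
    rw [← comp_vec3 v 3 4 6, transfer ![3,4,6] (by decide), comp_vec3 (M.transpose : Fin 9 → Fin 3 → GaloisField 2 2), hcol3, hcol4, hcol6]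
    apply Fintype.not_linearIndependent_iff.2
    refine ⟨![1, α, -1], ?_, 0, one_ne_zero⟩
    rw [Fin.sum_univ_three]; funext i; fin_cases i
    · show (1 : GaloisField 2 2) * 1 + α * 0 + (-1) * 1 = 0; ring
    · show (1 : GaloisField 2 2) * 1 + α * 1 + (-1) * α ^ 2 = 0; linear_combination -hα
    · show (1 : GaloisField 2 2) * 0 + α * 1 + (-1) * α = 0; ring
  have D378 : ¬ LinearIndependent F ![v 3, v 7, v 8] := by
    rw [← comp_vec3 v 3 7 8, transfer ![3,7,8] (by decide), comp_vec3 (M.transpose : Fin 9 → Fin 3 → GaloisField 2 2), hcol3, hcol7, hcol8]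
    apply Fintype.not_linearIndependent_iff.2
    refine ⟨![-α ^ 2, α, -1], ?_, 2, neg_ne_zero.mpr one_ne_zero⟩
    rw [Fin.sum_univ_three]; funext i; fin_cases i
    · show (-α ^ 2) * 1 + α * 1 + (-1) * 1 = 0; linear_combination -hα - h2K
    · show (-α ^ 2) * 1 + α * α + (-1) * 0 = 0; ring
    · show (-α ^ 2) * 0 + α * 1 + (-1) * α = 0; ring
  have D458 : ¬ LinearIndependent F ![v 4, v 5, v 8] := by
    rw [← comp_vec3 v 4 5 8, transfer ![4,5,8] (by decide), comp_vec3 (M.transpose : Fin 9 → Fin 3 → GaloisField 2 2), hcol4, hcol5, hcol8]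
    apply Fintype.not_linearIndependent_iff.2
    refine ⟨![-α ^ 2, 1, -1], ?_, 1, one_ne_zero⟩
    rw [Fin.sum_univ_three]; funext i; fin_cases i
    · show (-α ^ 2) * 0 + 1 * 1 + (-1) * 1 = 0; ring
    · show (-α ^ 2) * 1 + 1 * α ^ 2 + (-1) * 0 = 0; ring
    · show (-α ^ 2) * 1 + 1 * 1 + (-1) * α = 0; linear_combination -hα - α * h2K
  -- dependent 4-element sets {0,1,2,j}, transferred to F
  have D0123 : ¬ LinearIndependent F ![v 0, v 1, v 2, v 3] := by
    rw [← comp_vec4 v 0 1 2 3, transfer ![0,1,2,3] (by decide), comp_vec4 (M.transpose : Fin 9 → Fin 3 → GaloisField 2 2),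
      hcol0, hcol1, hcol2, hcol3]
    apply Fintype.not_linearIndependent_iff.2
    refine ⟨![1, 1, 0, -1], ?_, 3, neg_ne_zero.mpr one_ne_zero⟩
    rw [Fin.sum_univ_four]; funext i; fin_cases i
    · show (1 : GaloisField 2 2) * 1 + 1 * 0 + 0 * 0 + (-1) * 1 = 0; ring
    · show (1 : GaloisField 2 2) * 0 + 1 * 1 + 0 * 0 + (-1) * 1 = 0; ring
    · show (1 : GaloisField 2 2) * 0 + 1 * 0 + 0 * 1 + (-1) * 0 = 0; ring
  have D0124 : ¬ LinearIndependent F ![v 0, v 1, v 2, v 4] := by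
    rw [← comp_vec4 v 0 1 2 4, transfer ![0,1,2,4] (by decide), comp_vec4 (M.transpose : Fin 9 → Fin 3 → GaloisField 2 2),
      hcol0, hcol1, hcol2, hcol4]
    apply Fintype.not_linearIndependent_iff.2
    refine ⟨![0, 1, 1, -1], ?_, 3, neg_ne_zero.mpr one_ne_zero⟩
    rw [Fin.sum_univ_four]; funext i; fin_cases i
    · show (0 : GaloisField 2 2) * 1 + 1 * 0 + 1 * 0 + (-1) * 0 = 0; ring
    · show (0 : GaloisField 2 2) * 0 + 1 * 1 + 1 * 0 + (-1) * 1 = 0; ring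
    · show (0 : GaloisField 2 2) * 0 + 1 * 0 + 1 * 1 + (-1) * 1 = 0; ring
  have D0125 : ¬ LinearIndependent F ![v 0, v 1, v 2, v 5] := by
    rw [← comp_vec4 v 0 1 2 5, transfer ![0,1,2,5] (by decide), comp_vec4 (M.transpose : Fin 9 → Fin 3 → GaloisField 2 2),
      hcol0, hcol1, hcol2, hcol5]
    apply Fintype.not_linearIndependent_iff.2
    refine ⟨![1, α ^ 2, 1, -1], ?_, 3, neg_ne_zero.mpr one_ne_zero⟩
    rw [Fin.sum_univ_four]; funext i; fin_cases i
    · show (1 : GaloisField 2 2) * 1 + α ^ 2 * 0 + 1 * 0 + (-1) * 1 = 0; ring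
    · show (1 : GaloisField 2 2) * 0 + α ^ 2 * 1 + 1 * 0 + (-1) * α ^ 2 = 0; ring
    · show (1 : GaloisField 2 2) * 0 + α ^ 2 * 0 + 1 * 1 + (-1) * 1 = 0; ring
  have D0126 : ¬ LinearIndependent F ![v 0, v 1, v 2, v 6] := by
    rw [← comp_vec4 v 0 1 2 6, transfer ![0,1,2,6] (by decide), comp_vec4 (M.transpose : Fin 9 → Fin 3 → GaloisField 2 2),
      hcol0, hcol1, hcol2, hcol6]
    apply Fintype.not_linearIndependent_iff.2
    refine ⟨![1, α ^ 2, α, -1], ?_, 3, neg_ne_zero.mpr one_ne_zero⟩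
    rw [Fin.sum_univ_four]; funext i; fin_cases i
    · show (1 : GaloisField 2 2) * 1 + α ^ 2 * 0 + α * 0 + (-1) * 1 = 0; ring
    · show (1 : GaloisField 2 2) * 0 + α ^ 2 * 1 + α * 0 + (-1) * α ^ 2 = 0; ring
    · show (1 : GaloisField 2 2) * 0 + α ^ 2 * 0 + α * 1 + (-1) * α = 0; ring
  have D0127 : ¬ LinearIndependent F ![v 0, v 1, v 2, v 7] := by
    rw [← comp_vec4 v 0 1 2 7, transfer ![0,1,2,7] (by decide), comp_vec4 (M.transpose : Fin 9 → Fin 3 → GaloisField 2 2),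
      hcol0, hcol1, hcol2, hcol7]
    apply Fintype.not_linearIndependent_iff.2
    refine ⟨![1, α, 1, -1], ?_, 3, neg_ne_zero.mpr one_ne_zero⟩
    rw [Fin.sum_univ_four]; funext i; fin_cases i
    · show (1 : GaloisField 2 2) * 1 + α * 0 + 1 * 0 + (-1) * 1 = 0; ring
    · show (1 : GaloisField 2 2) * 0 + α * 1 + 1 * 0 + (-1) * α = 0; ring
    · show (1 : GaloisField 2 2) * 0 + α * 0 + 1 * 1 + (-1) * 1 = 0; ring
  have D0128 : ¬ LinearIndependent F ![v 0, v 1, v 2, v 8] := by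
    rw [← comp_vec4 v 0 1 2 8, transfer ![0,1,2,8] (by decide), comp_vec4 (M.transpose : Fin 9 → Fin 3 → GaloisField 2 2),
      hcol0, hcol1, hcol2, hcol8]
    apply Fintype.not_linearIndependent_iff.2
    refine ⟨![1, 0, α, -1], ?_, 3, neg_ne_zero.mpr one_ne_zero⟩
    rw [Fin.sum_univ_four]; funext i; fin_cases i
    · show (1 : GaloisField 2 2) * 1 + 0 * 0 + α * 0 + (-1) * 1 = 0; ring
    · show (1 : GaloisField 2 2) * 0 + 0 * 1 + α * 0 + (-1) * 0 = 0; ring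
    · show (1 : GaloisField 2 2) * 0 + 0 * 0 + α * 1 + (-1) * α = 0; ring
  -- coordinates of v 3, ..., v 8 in the basis v 0, v 1, v 2
  obtain ⟨x3, y3, z3, hv3⟩ := exists_coords I012 D0123
  obtain ⟨x4, y4, z4, hv4⟩ := exists_coords I012 D0124
  obtain ⟨x5, y5, z5, hv5⟩ := exists_coords I012 D0125
  obtain ⟨x6, y6, z6, hv6⟩ := exists_coords I012 D0126
  obtain ⟨x7, y7, z7, hv7⟩ := exists_coords I012 D0127
  obtain ⟨x8, y8, z8, hv8⟩ := exists_coords I012 D0128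
  have hb0 : v 0 = (1:F) • v 0 + (0:F) • v 1 + (0:F) • v 2 := by module
  have hb1 : v 1 = (0:F) • v 0 + (1:F) • v 1 + (0:F) • v 2 := by module
  have hb2 : v 2 = (0:F) • v 0 + (0:F) • v 1 + (1:F) • v 2 := by module
  -- vanishing coordinates
  have hz3 : z3 = 0 := by
    obtain ⟨g, hne, e0, e1, e2⟩ := dep_rel I012 D013 hb0 hb1 hv3
    have hg2 : g 2 ≠ 0 := by
      intro hg2
      have h0 : g 0 = 0 := by linear_combination e0 - x3 * hg2
      have h1 : g 1 = 0 := by linear_combination e1 - y3 * hg2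
      rcases hne with hh | hh | hh
      exacts [hh h0, hh h1, hh hg2]
    have h' : g 2 * z3 = 0 := by linear_combination e2
    exact (mul_eq_zero.1 h').resolve_left hg2
  have hx4 : x4 = 0 := by
    obtain ⟨g, hne, e0, e1, e2⟩ := dep_rel I012 D124 hb1 hb2 hv4
    have hg2 : g 2 ≠ 0 := by
      intro hg2
      have h0 : g 0 = 0 := by linear_combination e1 - y4 * hg2
      have h1 : g 1 = 0 := by linear_combination e2 - z4 * hg2
      rcases hne with hh | hh | hh
      exacts [hh h0, hh h1, hh hg2]
    have h' : g 2 * x4 = 0 := by linear_combination e0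
    exact (mul_eq_zero.1 h').resolve_left hg2
  have hy8 : y8 = 0 := by
    obtain ⟨g, hne, e0, e1, e2⟩ := dep_rel I012 D028 hb0 hb2 hv8
    have hg2 : g 2 ≠ 0 := by
      intro hg2
      have h0 : g 0 = 0 := by linear_combination e0 - x8 * hg2
      have h1 : g 1 = 0 := by linear_combination e2 - z8 * hg2
      rcases hne with hh | hh | hh
      exacts [hh h0, hh h1, hh hg2]
    have h' : g 2 * y8 = 0 := by linear_combination e1
    exact (mul_eq_zero.1 h').resolve_left hg2
  rw [hz3] at hv3
  rw [hx4] at hv4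
  rw [hy8] at hv8
  -- nonvanishing coordinates
  have hx3 : x3 ≠ 0 := by
    intro hc
    exact ne_of_li I123 (p := y3) (q := (0:F)) (by rw [hc] at hv3; linear_combination (norm := module) hv3)
  have hy3 : y3 ≠ 0 := by
    intro hc
    exact ne_of_li I023 (p := x3) (q := (0:F)) (by rw [hc] at hv3; linear_combination (norm := module) hv3)
  have hy4 : y4 ≠ 0 := by
    intro hc
    exact ne_of_li I024 (p := (0:F)) (q := z4) (by rw [hc] at hv4; linear_combination (norm := module) hv4)
  have hz4 : z4 ≠ 0 := by
    intro hc
    exact ne_of_li I014 (p := (0:F)) (q := y4) (by rw [hc] at hv4; linear_combination (norm := module) hv4)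
  have hz5 : z5 ≠ 0 := by
    intro hc
    exact ne_of_li I015 (p := x5) (q := y5) (by rw [hc] at hv5; linear_combination (norm := module) hv5)
  have hx6 : x6 ≠ 0 := by
    intro hc
    exact ne_of_li I126 (p := y6) (q := z6) (by rw [hc] at hv6; linear_combination (norm := module) hv6)
  have hy6 : y6 ≠ 0 := by
    intro hc
    exact ne_of_li I026 (p := x6) (q := z6) (by rw [hc] at hv6; linear_combination (norm := module) hv6)
  have hx7 : x7 ≠ 0 := by
    intro hc
    exact ne_of_li I127 (p := y7) (q := z7) (by rw [hc] at hv7; linear_combination (norm := module) hv7)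
  have hy7 : y7 ≠ 0 := by
    intro hc
    exact ne_of_li I027 (p := x7) (q := z7) (by rw [hc] at hv7; linear_combination (norm := module) hv7)
  have hz7 : z7 ≠ 0 := by
    intro hc
    exact ne_of_li I017 (p := x7) (q := y7) (by rw [hc] at hv7; linear_combination (norm := module) hv7)
  have hx8 : x8 ≠ 0 := by
    intro hc
    exact ne_of_li I128 (p := (0:F)) (q := z8) (by rw [hc] at hv8; linear_combination (norm := module) hv8)
  have hz8 : z8 ≠ 0 := by
    intro hc
    exact ne_of_li I018 (p := x8) (q := (0:F)) (by rw [hc] at hv8; linear_combination (norm := module) hv8)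
  -- the seven determinant relations
  have k1 : y6 * z7 - z6 * y7 = 0 := by
    obtain ⟨g, hne, e0, e1, e2⟩ := dep_rel I012 D067 hb0 hv6 hv7
    by_cases hg1 : g 1 = 0
    · have hg2 : g 2 ≠ 0 := by
        intro hg2
        have h0 : g 0 = 0 := by linear_combination e0 - x6 * hg1 - x7 * hg2
        rcases hne with hh | hh | hh
        exacts [hh h0, hh hg1, hh hg2]
      have h' : g 2 * (y6 * z7 - z6 * y7) = 0 := by linear_combination y6 * e2 - z6 * e1
      exact (mul_eq_zero.1 h').resolve_left hg2
    · have h' : g 1 * (y6 * z7 - z6 * y7) = 0 := by linear_combination z7 * e1 - y7 * e2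
      exact (mul_eq_zero.1 h').resolve_left hg1
  have k2 : x5 * z7 - z5 * x7 = 0 := by
    obtain ⟨g, hne, e0, e1, e2⟩ := dep_rel I012 D157 hb1 hv5 hv7
    by_cases hg1 : g 1 = 0
    · have hg2 : g 2 ≠ 0 := by
        intro hg2
        have h0 : g 0 = 0 := by linear_combination e1 - y5 * hg1 - y7 * hg2
        rcases hne with hh | hh | hh
        exacts [hh h0, hh hg1, hh hg2]
      have h' : g 2 * (x5 * z7 - z5 * x7) = 0 := by linear_combination x5 * e2 - z5 * e0
      exact (mul_eq_zero.1 h').resolve_left hg2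
    · have h' : g 1 * (x5 * z7 - z5 * x7) = 0 := by linear_combination z7 * e0 - x7 * e2
      exact (mul_eq_zero.1 h').resolve_left hg1
  have k3 : x6 * z8 - z6 * x8 = 0 := by
    obtain ⟨g, hne, e0, e1, e2⟩ := dep_rel I012 D168 hb1 hv6 hv8
    by_cases hg1 : g 1 = 0
    · have hg2 : g 2 ≠ 0 := by
        intro hg2
        have h0 : g 0 = 0 := by linear_combination e1 - y6 * hg1
        rcases hne with hh | hh | hh
        exacts [hh h0, hh hg1, hh hg2]
      have h' : g 2 * (x6 * z8 - z6 * x8) = 0 := by linear_combination x6 * e2 - z6 * e0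
      exact (mul_eq_zero.1 h').resolve_left hg2
    · have h' : g 1 * (x6 * z8 - z6 * x8) = 0 := by linear_combination z8 * e0 - x8 * e2
      exact (mul_eq_zero.1 h').resolve_left hg1
  have k4 : x5 * y6 - y5 * x6 = 0 := by
    obtain ⟨g, hne, e0, e1, e2⟩ := dep_rel I012 D256 hb2 hv5 hv6
    by_cases hg1 : g 1 = 0
    · have hg2 : g 2 ≠ 0 := by
        intro hg2
        have h0 : g 0 = 0 := by linear_combination e2 - z5 * hg1 - z6 * hg2
        rcases hne with hh | hh | hh
        exacts [hh h0, hh hg1, hh hg2]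
      have h' : g 2 * (x5 * y6 - y5 * x6) = 0 := by linear_combination x5 * e1 - y5 * e0
      exact (mul_eq_zero.1 h').resolve_left hg2
    · have h' : g 1 * (x5 * y6 - y5 * x6) = 0 := by linear_combination y6 * e0 - x6 * e1
      exact (mul_eq_zero.1 h').resolve_left hg1
  have k5 : x3 * y6 * z4 - x6 * y3 * z4 - x3 * y4 * z6 = 0 := by
    obtain ⟨g, hne, e0, e1, e2⟩ := dep_rel I012 D346 hv3 hv4 hv6
    have hg2 : g 2 ≠ 0 := by
      intro hg2
      have h0 : g 0 * x3 = 0 := by linear_combination e0 - x6 * hg2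
      have h0' : g 0 = 0 := (mul_eq_zero.1 h0).resolve_right hx3
      have h1 : g 1 * z4 = 0 := by linear_combination e2 - z6 * hg2
      have h1' : g 1 = 0 := (mul_eq_zero.1 h1).resolve_right hz4
      rcases hne with hh | hh | hh
      exacts [hh h0', hh h1', hh hg2]
    have h' : g 2 * (x3 * y6 * z4 - x6 * y3 * z4 - x3 * y4 * z6) = 0 := by
      linear_combination x3 * z4 * e1 - y3 * z4 * e0 - x3 * y4 * e2
    exact (mul_eq_zero.1 h').resolve_left hg2
  have k6 : x3 * y7 * z8 + y3 * z7 * x8 - y3 * x7 * z8 = 0 := by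
    obtain ⟨g, hne, e0, e1, e2⟩ := dep_rel I012 D378 hv3 hv7 hv8
    have hg1 : g 1 ≠ 0 := by
      intro hg1
      have h0 : g 0 * y3 = 0 := by linear_combination e1 - y7 * hg1
      have h0' : g 0 = 0 := (mul_eq_zero.1 h0).resolve_right hy3
      have h1 : g 2 * z8 = 0 := by linear_combination e2 - z7 * hg1
      have h1' : g 2 = 0 := (mul_eq_zero.1 h1).resolve_right hz8
      rcases hne with hh | hh | hh
      exacts [hh h0', hh hg1, hh h1']
    have h' : g 1 * (x3 * y7 * z8 + y3 * z7 * x8 - y3 * x7 * z8) = 0 := by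
      linear_combination x3 * z8 * e1 + y3 * x8 * e2 - y3 * z8 * e0
    exact (mul_eq_zero.1 h').resolve_left hg1
  have k7 : y4 * z5 * x8 - z4 * y5 * x8 - y4 * x5 * z8 = 0 := by
    obtain ⟨g, hne, e0, e1, e2⟩ := dep_rel I012 D458 hv4 hv5 hv8
    have hg1 : g 1 ≠ 0 := by
      intro hg1
      have h0 : g 0 * y4 = 0 := by linear_combination e1 - y5 * hg1
      have h0' : g 0 = 0 := (mul_eq_zero.1 h0).resolve_right hy4
      have h1 : g 2 * x8 = 0 := by linear_combination e0 - x5 * hg1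
      have h1' : g 2 = 0 := (mul_eq_zero.1 h1).resolve_right hx8
      rcases hne with hh | hh | hh
      exacts [hh h0', hh hg1, hh h1']
    have h' : g 1 * (y4 * z5 * x8 - z4 * y5 * x8 - y4 * x5 * z8) = 0 := by
      linear_combination y4 * x8 * e2 - z4 * x8 * e1 - y4 * z8 * e0
    exact (mul_eq_zero.1 h').resolve_left hg1
  -- the characteristic-2 certificate
  have final : (2 : F) * (x3 * x6 * y6 ^ 2 * z4 * z5 * z7 * z8) = 0 := by
    linear_combination ((y4 * z6 + y6 * z4) * x6 * x3 * z5 * z8) * k1 +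
      (-(y4 * z6 + y6 * z4) * x6 * y3 * z6 * z8) * k2 +
      ((y4 * z6 + y6 * z4) * x6 * y3 * z5 * z7 - y3 * z6 * z7 * (y4 * z5 * x6 - z4 * x5 * y6)) * k3 +
      (y3 * z6 * z7 * z4 * z6 * x8) * k4 +
      (y6 * z5 * x6 * z7 * z8) * k5 +
      ((y4 * z6 + y6 * z4) * x6 * z5 * z6) * k6 +
      (-(y3 * z6 * z7 * x6 * z6)) * k7
  have hMne : x3 * x6 * y6 ^ 2 * z4 * z5 * z7 * z8 ≠ 0 :=
    mul_ne_zero (mul_ne_zero (mul_ne_zero (mul_ne_zero (mul_ne_zero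
      (mul_ne_zero hx3 hx6) (pow_ne_zero 2 hy6)) hz4) hz5) hz7) hz8
  have h2F : (2 : F) = 0 := (mul_eq_zero.1 final).resolve_right hMne
  haveI hchar : CharP F (ringChar F) := ringChar.charP F
  have hdvd : ringChar F ∣ 2 := ringChar.dvd (by exact_mod_cast h2F)
  rcases (Nat.dvd_prime Nat.prime_two).1 hdvd with h1 | h2
  · exact absurd h1 (CharP.char_ne_one F (ringChar F))
  · exact h2 ▸ hchar
end
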